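/- Let t ≥ 1 and let G be an n-vertex t-tough graph, and let C be a non-Hamiltonian cycle of G. If a vertex x ∈ V(G) \ V(C) has more than n/(t+1) − 1 neighbors on C, then G has a cycle C' with V(C') = V(C) ∪ {x}. -/

import Mathlib

open SimpleGraph

/-- The number of components of `G − S`. -/
noncomputable def numComp {V : Type*} (G : SimpleGraph V) (S : Set V) : ℕ :=
  Nat.card ((G.induce Sᶜ).ConnectedComponent)

/-- `G` is `t`-tough: `|S| ≥ t · c(G − S)` for every `S` with `c(G − S) ≥ 2`. -/
def Tough {V : Type*} [Fintype V] (t : ℝ) (G : SimpleGraph V) : Prop :=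
  ∀ S : Finset V, 2 ≤ numComp G ↑S → t * (numComp G ↑S : ℝ) ≤ (S.card : ℝ)

section Aux

variable {V : Type*}

private lemma numComp_compl_indep [Fintype V] [DecidableEq V] (G : SimpleGraph V) (I : Finset V)
    (hind : ∀ a ∈ I, ∀ b ∈ I, G.Adj a b → False) :
    numComp G ↑(Iᶜ) = I.card := by
  classical
  unfold numComp
  have hset : ((↑(Iᶜ) : Set V)ᶜ) = (↑I : Set V) := by
    simp
  rw [hset]
  have hbij : Function.Bijective ((G.induce (↑I : Set V)).connectedComponentMk) := by
    constructor
    · intro a b hab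
      obtain ⟨w⟩ := (SimpleGraph.ConnectedComponent.eq).mp hab
      cases w with
      | nil => rfl
      | cons h' p =>
        rename_i u
        have hadj : G.Adj ↑a ↑u := h'
        exact (hind _ (by exact_mod_cast a.2) _ (by exact_mod_cast u.2) hadj).elim
    · exact Quot.mk_surjective
  rw [← Nat.card_eq_of_bijective _ hbij, Nat.card_coe_set_eq, Set.ncard_coe_finset]

private lemma indep_card_bound [Fintype V] [DecidableEq V] {t : ℝ} (G : SimpleGraph V)
    (htough : Tough t G) (I : Finset V) (h2 : 2 ≤ I.card)
    (hind : ∀ a ∈ I, ∀ b ∈ I, G.Adj a b → False) :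
    (t + 1) * (I.card : ℝ) ≤ (Fintype.card V : ℝ) := by
  have hnc := numComp_compl_indep G I hind
  have hT := htough Iᶜ (by rw [hnc]; exact h2)
  rw [hnc] at hT
  have hle : I.card ≤ Fintype.card V := I.card_le_univ
  have hcc : ((Iᶜ).card : ℝ) = (Fintype.card V : ℝ) - I.card := by
    rw [Finset.card_compl, Nat.cast_sub hle]
  rw [hcc] at hT
  linarith

private lemma support_toFinset_tail [DecidableEq V] {G : SimpleGraph V} {v : V}
    (w : G.Walk v v) (hw : ¬ w.Nil) : w.support.toFinset = w.support.tail.toFinset := by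
  have hlen : w.support.length = w.length + 1 := Walk.length_support w
  have hpos : 0 < w.length := Walk.not_nil_iff_lt_length.mp hw
  have hdne : w.darts ≠ [] := by
    have hld : w.darts.length = w.length := Walk.length_darts w
    intro h
    rw [h] at hld
    simp at hld
    omega
  have hv : v ∈ w.support.tail := by
    rw [← Walk.map_snd_darts]
    have hm := List.mem_map_of_mem (f := fun d : G.Dart => d.snd) (List.getLast_mem hdne)
    rwa [show (w.darts.getLast hdne).snd = v by rw [Walk.getLast_darts_eq_lastDart]; simp [Walk.lastDart]] at hm
  conv_lhs => rw [w.support_eq_cons]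
  rw [List.toFinset_cons, Finset.insert_eq_self.mpr (List.mem_toFinset.mpr hv)]

private lemma rotate_support_toFinset [DecidableEq V] {G : SimpleGraph V} {u v : V}
    (c : G.Walk v v) (hc : c.IsCycle) (h : u ∈ c.support) :
    (c.rotate _ h).support.toFinset = c.support.toFinset := by
  rw [support_toFinset_tail _ hc.not_nil, support_toFinset_tail _ (hc.rotate h).not_nil,
    List.toFinset_eq_of_perm _ _ (c.support_rotate _ h).perm]

private lemma surgeryA [DecidableEq V] {G : SimpleGraph V} {x y : V}
    (c : G.Walk y y) (hc : c.IsCycle) (hx : x ∉ c.support)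
    (hxy : G.Adj x y) (hxs : G.Adj x (c.getVert 1)) :
    ∃ (w : V) (c' : G.Walk w w), c'.IsCycle ∧
      c'.support.toFinset = insert x c.support.toFinset := by
  obtain ⟨s, hadj, rest, rfl⟩ := Walk.not_nil_iff.mp hc.not_nil
  rw [show (Walk.cons hadj rest).getVert 1 = s by
    rw [Walk.getVert_cons_succ, Walk.getVert_zero]] at hxs
  have hrest_nodup : rest.support.Nodup := by
    have h := hc.support_nodup
    simpa using h
  have hxrest : x ∉ rest.support := fun hm => hx (by simp [hm])
  refine ⟨x, Walk.cons hxs (rest.concat hxy.symm), ?_, ?_⟩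
  · rw [Walk.cons_isCycle_iff]
    refine ⟨Walk.IsPath.mk' ?_, ?_⟩
    · rw [Walk.support_concat]
      simp [List.concat_eq_append, List.nodup_append, hrest_nodup, hxrest]
      intro a ha h; subst h; exact hxrest ha
    · rw [Walk.edges_concat]
      simp only [List.concat_eq_append, List.mem_append, List.mem_singleton]
      rintro (hmem | hmem)
      · exact hxrest (rest.fst_mem_support_of_mem_edges hmem)
      · rw [Sym2.eq_iff] at hmem
        rcases hmem with ⟨rfl, -⟩ | ⟨-, rfl⟩
        · exact hx (Walk.start_mem_support _)
        · exact hadj.ne rfl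
  · have hy : y ∈ rest.support := rest.end_mem_support
    ext a
    simp only [Walk.support_cons, Walk.support_concat, List.concat_eq_append,
      List.mem_toFinset, List.mem_cons, List.mem_append, List.mem_singleton,
      Finset.mem_insert]
    constructor
    · rintro (rfl | h | rfl | h)
      · exact Or.inl rfl
      · exact Or.inr (Or.inr h)
      · exact Or.inl rfl
      · simp at h
    · rintro (rfl | rfl | h)
      · exact Or.inl rfl
      · exact Or.inr (Or.inl hy)
      · exact Or.inr (Or.inl h)

private lemma surgeryB [DecidableEq V] {G : SimpleGraph V} {x y s z : V}
    (hadj : G.Adj y s) (rest : G.Walk s y)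
    (hc : (Walk.cons hadj rest).IsCycle)
    (hx : x ∉ (Walk.cons hadj rest).support)
    (hxy : G.Adj x y) (hxz : G.Adj x z)
    (hz : z ∈ rest.support) (hzy : z ≠ y)
    (hchord : G.Adj ((rest.dropUntil z hz).getVert 1) s) :
    ∃ (w : V) (c' : G.Walk w w), c'.IsCycle ∧
      c'.support.toFinset = insert x (Walk.cons hadj rest).support.toFinset := by
  classical
  set A := rest.takeUntil z hz with hA
  set D := rest.dropUntil z hz with hD0
  have hsplit : A.append D = rest := rest.take_spec hz
  have hDnn : ¬ D.Nil := by
    rw [Walk.not_nil_iff_lt_length]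
    rcases Nat.eq_zero_or_pos D.length with h0 | h
    · exact absurd (Walk.eq_of_length_eq_zero h0) hzy
    · exact h
  obtain ⟨s', hzs', B, hDeq⟩ := Walk.not_nil_iff.mp hDnn
  have hchord' : G.Adj s' s := by
    rwa [show D.getVert 1 = s' by rw [hDeq, Walk.getVert_cons_succ, Walk.getVert_zero]] at hchord
  have hrs : rest.support = A.support ++ B.support := by
    conv_lhs => rw [← hsplit]
    rw [Walk.support_append, hDeq]
    simp
  have hrest_nodup : rest.support.Nodup := by
    have h := hc.support_nodup
    simpa using h
  have hABnodup := hrs ▸ hrest_nodup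
  rw [List.nodup_append] at hABnodup
  obtain ⟨hAnodup, hBnodup, hdisj⟩ := hABnodup
  have hxrest : x ∉ rest.support := fun hm => hx (by simp [hm])
  have hxA : x ∉ A.support := fun h => hxrest (by rw [hrs]; exact List.mem_append_left _ h)
  have hxB : x ∉ B.support := fun h => hxrest (by rw [hrs]; exact List.mem_append_right _ h)
  have hsrest : s ∈ rest.support := rest.start_mem_support
  have hs'rest : s' ∈ rest.support := by
    apply rest.support_dropUntil_subset hz
    rw [← hD0, hDeq]
    simp
  -- the new walk
  refine ⟨x, Walk.cons hxy (B.reverse.append (Walk.cons hchord' (A.concat hxz.symm))), ?_, ?_⟩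
  · rw [Walk.cons_isCycle_iff]
    have hPsup : (B.reverse.append (Walk.cons hchord' (A.concat hxz.symm))).support
        = B.support.reverse ++ (A.support ++ [x]) := by
      rw [Walk.support_append, Walk.support_reverse]
      simp [Walk.support_concat, List.concat_eq_append]
    refine ⟨Walk.IsPath.mk' ?_, ?_⟩
    · rw [hPsup, List.nodup_append, List.nodup_append]
      refine ⟨List.nodup_reverse.mpr hBnodup, ⟨hAnodup, List.nodup_singleton x, ?_⟩, ?_⟩
      · intro a ha b hb
        rw [List.mem_singleton] at hb
        subst hb
        rintro rfl
        exact hxA ha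
      · intro a ha b hb
        rw [List.mem_reverse] at ha
        simp only [List.mem_append, List.mem_singleton] at hb
        rcases hb with h | hb
        · exact fun e => hdisj b h a ha e.symm
        · intro e; subst e; subst hb; exact hxB ha
    · rw [Walk.edges_append, Walk.edges_reverse, Walk.edges_cons, Walk.edges_concat]
      simp only [List.mem_append, List.mem_reverse, List.mem_cons, List.concat_eq_append,
        List.mem_singleton]
      rintro (hmem | hmem | hmem | hmem | hmem)
      · exact hxB (B.fst_mem_support_of_mem_edges hmem)
      · rw [Sym2.eq_iff] at hmem
        exact hmem.elim (fun h9 => hxrest (h9.1 ▸ hs'rest)) (fun h9 => hxrest (h9.1 ▸ hsrest))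
      · exact hxA (A.fst_mem_support_of_mem_edges hmem)
      · rw [Sym2.eq_iff] at hmem
        exact hmem.elim (fun h9 => hxrest (h9.1 ▸ hz)) (fun h9 => hzy h9.2.symm)
      · simp at hmem
  · have hyB : y ∈ B.support := B.end_mem_support
    ext a
    simp only [Walk.support_cons, Walk.support_append, Walk.support_reverse,
      Walk.support_concat, List.concat_eq_append, List.tail_cons, List.mem_toFinset,
      List.mem_cons, List.mem_append, List.mem_reverse, List.mem_singleton,
      Finset.mem_insert, hrs]
    have hyB' : a = y → a ∈ B.support := fun h => h ▸ hyB
    constructor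
    · rintro (h | h | h | h | h)
      · tauto
      · tauto
      · tauto
      · tauto
      · simp at h
    · rintro (h | h | h | h)
      · tauto
      · exact Or.inr (Or.inl (hyB' h))
      · tauto
      · tauto

private lemma darts_ne_nil {G : SimpleGraph V} {v : V} {c : G.Walk v v}
    (hc : c.IsCycle) : c.darts ≠ [] := by
  have hld : c.darts.length = c.length := Walk.length_darts c
  have h3 := hc.three_le_length
  intro h
  rw [h] at hld
  simp at hld
  omega

private lemma cycle_fst_darts_nodup [DecidableEq V] {G : SimpleGraph V} {v : V} {c : G.Walk v v}
    (hc : c.IsCycle) : (c.darts.map (fun d : G.Dart => d.fst)).Nodup := by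
  have hdne : c.darts ≠ [] := darts_ne_nil hc
  have htail : c.support.tail.Nodup := hc.support_nodup
  have hgl : c.support.tail.getLast? = some v := by
    have h2 : (c.darts.getLast hdne).snd = v := by rw [Walk.getLast_darts_eq_lastDart]; simp [Walk.lastDart]
    rw [← List.getLast_map (f := fun d : G.Dart => d.snd)] at h2
    rw [← Walk.map_snd_darts, List.getLast?_eq_getLast_of_ne_nil (by simpa using hdne)]
    exact congrArg some h2
    simpa using hdne
  rw [show (fun d : G.Dart => d.fst) = (·.fst) from rfl, Walk.map_fst_darts]
  have hlen : c.support.length = c.length + 1 := Walk.length_support c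
  have h3 := hc.three_le_length
  rcases hst : c.support.tail with _ | ⟨b, t⟩
  · exfalso
    have h0 := congr_arg List.length hst
    simp only [List.length_tail, hlen, List.length_nil] at h0
    omega
  · rw [hst] at htail hgl
    have hvmem : v ∈ (b :: t).getLast? := by rw [hgl]; rfl
    have hbt : (b :: t).dropLast ++ [v] = b :: t := List.dropLast_append_getLast? v hvmem
    rw [← hbt, List.nodup_append] at htail
    have hsup : c.support = v :: b :: t := by rw [c.support_eq_cons, hst]
    rw [hsup]
    have hdl : (v :: b :: t).dropLast = v :: (b :: t).dropLast := rfl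
    rw [hdl, List.nodup_cons]
    refine ⟨fun hm => ?_, htail.1⟩
    exact htail.2.2 v hm v (by simp) rfl

end Aux


/-- Cycle extension lemma: if a vertex off a non-hamiltonian cycle has more than
n/(t+1) − 1 neighbors on the cycle, the cycle can be extended through it. -/
theorem cycle_extension {V : Type*} [Fintype V] [DecidableEq V] (t : ℝ) (ht : 1 ≤ t)
    (G : SimpleGraph V) (htough : Tough t G)
    (v0 : V) (c : G.Walk v0 v0) (hcyc : c.IsCycle)
    (hnonham : c.support.toFinset ≠ Finset.univ)
    (x : V) (hx : x ∉ c.support)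
    (hdeg : (Fintype.card V : ℝ) / (t + 1) - 1 <
      (Nat.card {y : V | y ∈ c.support ∧ G.Adj x y} : ℝ)) :
    ∃ (w : V) (c' : G.Walk w w), c'.IsCycle ∧
      c'.support.toFinset = insert x c.support.toFinset := by
  classical
  by_contra hcon
  have hnoext : ∀ (w : V) (c' : G.Walk w w), c'.IsCycle →
      c'.support.toFinset = insert x c.support.toFinset → False :=
    fun w c' h1 h2 => hcon ⟨w, c', h1, h2⟩
  -- dart uniqueness facts
  have hsnd_nodup : (c.darts.map (fun d : G.Dart => d.snd)).Nodup := by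
    rw [show (fun d : G.Dart => d.snd) = (·.snd) from rfl, Walk.map_snd_darts]
    exact hcyc.support_nodup
  have hfst_nodup : (c.darts.map (fun d : G.Dart => d.fst)).Nodup := cycle_fst_darts_nodup hcyc
  -- successor function
  set succ : V → V := fun y => if h : y ∈ c.support then (c.rotate _ h).getVert 1 else y
    with hsuccdef
  have hsucceq : ∀ (y : V) (h : y ∈ c.support), succ y = (c.rotate _ h).getVert 1 := by
    intro y h
    rw [hsuccdef]
    exact dif_pos h
  have hdartmem : ∀ (y : V), y ∈ c.support →
      ∃ d ∈ c.darts, d.fst = y ∧ d.snd = succ y := by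
    intro y h
    obtain ⟨s, hadj, q, heq⟩ := Walk.not_nil_iff.mp (hcyc.rotate h).not_nil
    have hgv : succ y = s := by
      rw [hsucceq y h, heq, Walk.getVert_cons_succ, Walk.getVert_zero]
    refine ⟨⟨(y, s), hadj⟩, ?_, rfl, hgv.symm⟩
    have hmem : (⟨(y, s), hadj⟩ : G.Dart) ∈ (c.rotate _ h).darts := by
      rw [heq, Walk.darts_cons]
      exact List.mem_cons_self
    exact ((c.rotate_darts _ h).mem_iff).mp hmem
  have hsucc_adj : ∀ (y : V), y ∈ c.support → G.Adj y (succ y) := by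
    intro y h
    obtain ⟨d, _, hf, hs⟩ := hdartmem y h
    have hda := d.adj
    rw [hf, hs] at hda
    exact hda
  have hsucc_mem : ∀ (y : V), y ∈ c.support → succ y ∈ c.support := by
    intro y h
    obtain ⟨d, hd, _, hs⟩ := hdartmem y h
    rw [← hs]
    exact Walk.dart_snd_mem_support_of_mem_darts c hd
  have hsucc_inj : ∀ (y : V), y ∈ c.support → ∀ (z : V), z ∈ c.support →
      succ y = succ z → y = z := by
    intro y hy z hz hs
    obtain ⟨d, hd, hdf, hds⟩ := hdartmem y hy
    obtain ⟨d', hd', hdf', hds'⟩ := hdartmem z hz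
    have hdd : d = d' := List.inj_on_of_nodup_map hsnd_nodup hd hd' (by rw [hds, hds', hs])
    rw [← hdf, ← hdf', hdd]
  have hfst_uniq : ∀ d ∈ c.darts, ∀ d' ∈ c.darts, d.fst = d'.fst → d = d' :=
    fun d hd d' hd' h => List.inj_on_of_nodup_map hfst_nodup hd hd' h
  -- neighborhood on the cycle
  set N : Finset V := Finset.univ.filter (fun y => y ∈ c.support ∧ G.Adj x y) with hNdef
  have hNmem : ∀ y : V, y ∈ N ↔ (y ∈ c.support ∧ G.Adj x y) := by
    intro y
    rw [hNdef]
    simp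
  have hxrotsup : ∀ (y : V) (h : y ∈ c.support), x ∉ (c.rotate _ h).support := by
    intro y h hm
    apply hx
    rw [← List.mem_toFinset, ← rotate_support_toFinset c hcyc h, List.mem_toFinset]
    exact hm
  -- Fact A : the successor of a neighbor is not a neighbor
  have hA : ∀ y ∈ N, ¬ G.Adj x (succ y) := by
    intro y hy hadjxs
    obtain ⟨hysup, hxyadj⟩ := (hNmem y).mp hy
    obtain ⟨w, c', hc', hsup⟩ := surgeryA (c.rotate _ hysup) (hcyc.rotate hysup)
      (hxrotsup y hysup) hxyadj (by rw [← hsucceq y hysup]; exact hadjxs)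
    exact hnoext w c' hc' (by rw [hsup, rotate_support_toFinset c hcyc hysup])
  -- Fact B : successors of distinct neighbors are not adjacent
  have hB : ∀ y ∈ N, ∀ z ∈ N, z ≠ y → ¬ G.Adj (succ z) (succ y) := by
    intro y hy z hz hne hadj2
    obtain ⟨hysup, hxy'⟩ := (hNmem y).mp hy
    obtain ⟨hzsup, hxz'⟩ := (hNmem z).mp hz
    obtain ⟨s, hadjy, rest, heq⟩ := Walk.not_nil_iff.mp (hcyc.rotate hysup).not_nil
    have hs : s = succ y := by
      rw [hsucceq y hysup, heq, Walk.getVert_cons_succ, Walk.getVert_zero]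
    have hzcy : z ∈ (c.rotate _ hysup).support := by
      rw [← List.mem_toFinset, rotate_support_toFinset c hcyc hysup, List.mem_toFinset]
      exact hzsup
    have hzrest : z ∈ rest.support := by
      rw [heq, Walk.support_cons] at hzcy
      exact (List.mem_cons.mp hzcy).elim (fun h => absurd h hne) id
    have hkey : (rest.dropUntil z hzrest).getVert 1 = succ z := by
      have hDnn : ¬ (rest.dropUntil z hzrest).Nil := by
        rw [Walk.not_nil_iff_lt_length]
        rcases Nat.eq_zero_or_pos (rest.dropUntil z hzrest).length with h0 | h
        · exact absurd (Walk.eq_of_length_eq_zero h0) hne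
        · exact h
      obtain ⟨s2, hadjz, B, hDeq⟩ := Walk.not_nil_iff.mp hDnn
      have hgv : (rest.dropUntil z hzrest).getVert 1 = s2 := by
        rw [hDeq, Walk.getVert_cons_succ, Walk.getVert_zero]
      have hd1 : (⟨(z, s2), hadjz⟩ : G.Dart) ∈ c.darts := by
        have h1 : (⟨(z, s2), hadjz⟩ : G.Dart) ∈ (rest.dropUntil z hzrest).darts := by
          rw [hDeq, Walk.darts_cons]
          exact List.mem_cons_self
        have h2 := rest.darts_dropUntil_subset hzrest h1
        have h3 : (⟨(z, s2), hadjz⟩ : G.Dart) ∈ (c.rotate _ hysup).darts := by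
          rw [heq, Walk.darts_cons]
          exact List.mem_cons_of_mem _ h2
        exact ((c.rotate_darts _ hysup).mem_iff).mp h3
      obtain ⟨d', hd', hdf', hds'⟩ := hdartmem z hzsup
      have hdd := hfst_uniq _ hd1 _ hd' (by rw [hdf'])
      rw [hgv, ← hds', ← hdd]
    have hrot2 : (Walk.cons hadjy rest).IsCycle := heq ▸ hcyc.rotate hysup
    have hxrot2 : x ∉ (Walk.cons hadjy rest).support := heq ▸ hxrotsup y hysup
    obtain ⟨w, c', hc', hsup⟩ := surgeryB hadjy rest hrot2 hxrot2 hxy' hxz' hzrest hne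
      (by rw [hkey, hs]; exact hadj2)
    apply hnoext w c' hc'
    rw [hsup, ← heq, rotate_support_toFinset c hcyc hysup]
  -- build the independent set
  set S : Finset V := N.image succ with hSdef
  have hScard : S.card = N.card := by
    rw [hSdef]
    apply Finset.card_image_of_injOn
    intro a ha b hb hab
    exact hsucc_inj a ((hNmem a).mp ha).1 b ((hNmem b).mp hb).1 hab
  have hxS : x ∉ S := by
    intro hm
    rw [hSdef] at hm
    obtain ⟨y, hy, hxy2⟩ := Finset.mem_image.mp hm
    exact hx (hxy2 ▸ hsucc_mem y ((hNmem y).mp hy).1)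
  set I : Finset V := insert x S with hIdef
  have hIcard : I.card = N.card + 1 := by
    rw [hIdef, Finset.card_insert_of_notMem hxS, hScard]
  have hind : ∀ a ∈ I, ∀ b ∈ I, G.Adj a b → False := by
    intro a ha b hb hadj'
    rw [hIdef, Finset.mem_insert] at ha hb
    rcases ha with rfl | haS
    · rcases hb with rfl | hbS
      · exact hadj'.ne rfl
      · obtain ⟨y, hy, rfl⟩ := Finset.mem_image.mp hbS
        exact hA y hy hadj'
    · rcases hb with rfl | hbS
      · obtain ⟨y, hy, rfl⟩ := Finset.mem_image.mp haS
        exact hA y hy hadj'.symm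
      · obtain ⟨y, hy, rfl⟩ := Finset.mem_image.mp haS
        obtain ⟨z, hz, rfl⟩ := Finset.mem_image.mp hbS
        by_cases hyz : z = y
        · subst hyz
          exact hadj'.ne rfl
        · exact hB y hy z hz hyz hadj'.symm
  -- counting
  have hcard : (Nat.card {y : V | y ∈ c.support ∧ G.Adj x y} : ℕ) = N.card := by
    have hseteq : {y : V | y ∈ c.support ∧ G.Adj x y} = (↑N : Set V) := by
      ext a
      simp only [Set.mem_setOf_eq, Finset.mem_coe]
      exact (hNmem a).symm
    rw [hseteq, Nat.card_coe_set_eq, Set.ncard_coe_finset]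
  rw [hcard] at hdeg
  have htpos : (0 : ℝ) < t + 1 := by linarith
  rcases Nat.eq_zero_or_pos N.card with h0 | hpos
  · rw [h0] at hdeg
    push_cast at hdeg
    have hdiv : (Fintype.card V : ℝ) / (t + 1) < 1 := by linarith
    rw [div_lt_iff₀ htpos] at hdiv
    have hxv0 : x ≠ v0 := fun h => hx (h ▸ c.start_mem_support)
    have hnadj : ¬ G.Adj x v0 := by
      intro hadj'
      have hv0N : v0 ∈ N := (hNmem v0).mpr ⟨c.start_mem_support, hadj'⟩
      rw [Finset.card_eq_zero] at h0
      rw [h0] at hv0N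
      exact Finset.notMem_empty v0 hv0N
    have hpair : ∀ a ∈ ({x, v0} : Finset V), ∀ b ∈ ({x, v0} : Finset V),
        G.Adj a b → False := by
      intro a ha b hb hadj'
      rw [Finset.mem_insert, Finset.mem_singleton] at ha hb
      rcases ha with rfl | rfl <;> rcases hb with rfl | rfl
      · exact hadj'.ne rfl
      · exact hnadj hadj'
      · exact hnadj hadj'.symm
      · exact hadj'.ne rfl
    have hcard2 : ({x, v0} : Finset V).card = 2 := by
      rw [Finset.card_insert_of_notMem (by simp [hxv0]), Finset.card_singleton]
    have hb2 := indep_card_bound G htough {x, v0} (by rw [hcard2]) hpair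
    rw [hcard2] at hb2
    push_cast at hb2
    linarith
  · have h2 : 2 ≤ I.card := by omega
    have hb := indep_card_bound G htough I h2 hind
    rw [hIcard] at hb
    push_cast at hb
    have hdiv : (Fintype.card V : ℝ) / (t + 1) < (N.card : ℝ) + 1 := by linarith
    rw [div_lt_iff₀ htpos] at hdiv
    nlinarith
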